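/- Let p_θ(x^n) = ∏_{i=1}^n (2π)^{-1/2} exp(−(x_i−θ)²/2), let λ > 0, let w be the density of the N(0,1/λ) prior, p_W(x^n) = ∫ p_θ(x^n)w(θ)dθ, and let P̄^SD(θ|x^n) := p_θ(x^n)/p_W(x^n) be the (undampened) Savage–Dickey e-posterior. Then for every x^n ∈ ℝ^n with MLE θ̂ = n^{-1}∑ x_i: sup_{θ∈ℝ} (θ−θ̂)² · P̄^SD(θ|x^n) ≥ (1/n) · √((n+λ)/λ) · e^{−1/2}. In particular the risk assessment of the pure Savage–Dickey e-posterior for squared error loss is of order at least n^{−1/2}, as witnessed by evaluating at θ = θ̂ + n^{−1/2}. -/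

import Mathlib

open MeasureTheory Real

/-- The lower-bound claim at the end of Example (Improving Pure Savage–Dickey):
the squared-error risk assessment of the undampened Savage–Dickey e-posterior for
the normal location family with an `N(0, 1/λ)` prior is at least
`(1/n)·√((n+λ)/λ)·e^{−1/2}`, i.e. of order `n^{−1/2}`. -/
theorem pure_savage_dickey_risk_lower_bound
    (n : ℕ) (hn : 1 ≤ n) (lam : ℝ) (hlam : 0 < lam)
    -- the density of `n` i.i.d. `N(θ,1)` observations
    (p : ℝ → (Fin n → ℝ) → ℝ)
    (hp : ∀ θ x, p θ x = ∏ i, (2 * π) ^ (-(1 : ℝ) / 2) * exp (-(x i - θ) ^ 2 / 2))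
    -- the `N(0, 1/λ)` prior density and Bayes marginal
    (w : ℝ → ℝ)
    (hw : ∀ θ, w θ = Real.sqrt (lam / (2 * π)) * exp (-lam * θ ^ 2 / 2))
    (pW : (Fin n → ℝ) → ℝ)
    (hpW : ∀ x, pW x = ∫ θ, p θ x * w θ)
    -- the fixed data and the MLE
    (x : Fin n → ℝ)
    (θhat : ℝ) (hθhat : θhat = (∑ i, x i) / n) :
    (1 / (n : ℝ)) * Real.sqrt ((n + lam) / lam) * exp (-(1 : ℝ) / 2)
      ≤ ⨆ θ : ℝ, (θ - θhat) ^ 2 * (p θ x / pW x) := by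
  have hnR : (0:ℝ) < n := by exact_mod_cast hn
  have hnl : (0:ℝ) < (n:ℝ) + lam := by linarith
  have hpi : (0:ℝ) < π := pi_pos
  have hs : ∑ i, x i = (n:ℝ) * θhat := by rw [hθhat]; field_simp
  set S : ℝ := ∑ i, (x i - θhat)^2 with hS
  set K : ℝ := ((2*π) ^ (-(1:ℝ)/2)) ^ n with hKdef
  have hK : 0 < K := pow_pos (rpow_pos_of_pos (by positivity) _) n
  -- sum of squares decomposition
  have key : ∀ θ : ℝ, ∑ i, (x i - θ)^2 = S + (n:ℝ) * (θ - θhat)^2 := by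
    intro θ
    have h2 : ∑ i, ((x i - θ)^2 - (x i - θhat)^2)
        = ∑ i, ((θhat - θ)*2*x i - (θhat-θ)*(θ+θhat)) :=
      Finset.sum_congr rfl fun i _ => by ring
    simp only [Finset.sum_sub_distrib] at h2
    rw [← Finset.mul_sum, hs, Finset.sum_const, Finset.card_univ,
      Fintype.card_fin, nsmul_eq_mul] at h2
    nlinarith [h2]
  -- closed form for p θ x
  have hA : ∀ θ : ℝ, p θ x = K * exp (-(S/2) - ((n:ℝ)/2)*(θ-θhat)^2) := by
    intro θ
    rw [hp, Finset.prod_mul_distrib, Finset.prod_const, Finset.card_univ,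
      Fintype.card_fin, ← Real.exp_sum]
    congr 1
    have : ∑ i, (-(x i - θ)^2 / 2) = (-(1:ℝ)/2) * ∑ i, (x i - θ)^2 := by
      rw [Finset.mul_sum]; exact Finset.sum_congr rfl fun i _ => by ring
    rw [this, key θ]; ring
  set a : ℝ := ((n:ℝ) + lam)/2 with hadef
  have ha : 0 < a := by positivity
  set m : ℝ := (n:ℝ)*θhat/((n:ℝ)+lam) with hmdef
  set D : ℝ := ((n:ℝ)*lam/((n:ℝ)+lam))*θhat^2/2 with hDdef
  have hD : 0 ≤ D := by positivity
  set c : ℝ := K * Real.sqrt (lam/(2*π)) * exp (-(S/2) - D) with hcdef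
  have hc : 0 < c := by positivity
  -- integrand closed form
  have hint : ∀ θ : ℝ, p θ x * w θ = c * exp (-a * (θ - m)^2) := by
    intro θ
    have eid : (-(S/2) - ((n:ℝ)/2)*(θ-θhat)^2) + (-lam * θ^2/2)
        = (-(S/2) - D) + (-a*(θ-m)^2) := by
      rw [hDdef, hadef, hmdef]; field_simp; ring
    rw [hA θ, hw θ, hcdef]
    rw [mul_mul_mul_comm, ← Real.exp_add, eid, Real.exp_add]
    ring
  -- marginal closed form
  have hpw : pW x = c * Real.sqrt (π / a) := by
    rw [hpW]
    simp_rw [hint]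
    rw [integral_const_mul, ← integral_gaussian a,
      ← integral_sub_right_eq_self (fun θ => exp (-a*θ^2)) m]
  have hpWpos : 0 < pW x := by rw [hpw]; positivity
  -- sqrt manipulations
  have hprod : Real.sqrt (lam/(2*π)) * Real.sqrt (π/a) = Real.sqrt (lam/((n:ℝ)+lam)) := by
    rw [← Real.sqrt_mul (by positivity)]
    congr 1
    rw [hadef]; field_simp
  have hsqrt2 : Real.sqrt (((n:ℝ)+lam)/lam) * Real.sqrt (lam/((n:ℝ)+lam)) = 1 := by
    rw [← Real.sqrt_mul (by positivity),
      show ((n:ℝ)+lam)/lam * (lam/((n:ℝ)+lam)) = 1 by field_simp]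
    exact Real.sqrt_one
  set B : ℝ := Real.sqrt (((n:ℝ)+lam)/lam) * exp D with hBdef
  have hB : 0 < B := by positivity
  -- ratio closed form
  have hratio : ∀ θ : ℝ, p θ x / pW x = B * exp (-((n:ℝ)/2)*(θ-θhat)^2) := by
    intro θ
    rw [div_eq_iff hpWpos.ne', hA θ, hpw]
    have h1 : Real.sqrt (((n:ℝ)+lam)/lam) * (Real.sqrt (lam/(2*π)) * Real.sqrt (π/a)) = 1 := by
      rw [hprod, hsqrt2]
    symm
    calc B * exp (-((n:ℝ)/2)*(θ-θhat)^2) * (c * Real.sqrt (π/a))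
        = (Real.sqrt (((n:ℝ)+lam)/lam) * (Real.sqrt (lam/(2*π)) * Real.sqrt (π/a)))
          * K * (exp D * exp (-((n:ℝ)/2)*(θ-θhat)^2) * exp (-(S/2) - D)) := by
          rw [hBdef, hcdef]; ring
      _ = K * exp (-(S/2) - ((n:ℝ)/2)*(θ-θhat)^2) := by
          rw [h1, one_mul, ← Real.exp_add, ← Real.exp_add]
          congr 1; ring
  -- upper bound for boundedness
  have hbound : ∀ t : ℝ, t^2 * exp (-((n:ℝ)/2)*t^2) ≤ 2/(n:ℝ) := by
    intro t
    have huE : (((n:ℝ)/2)*t^2) * exp (-(((n:ℝ)/2)*t^2)) ≤ 1 := by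
      have h1 : ((n:ℝ)/2)*t^2 ≤ exp (((n:ℝ)/2)*t^2) :=
        le_trans (by linarith [Real.add_one_le_exp (((n:ℝ)/2)*t^2)])
          (le_refl _)
      have := mul_le_mul_of_nonneg_right h1 (exp_pos (-(((n:ℝ)/2)*t^2))).le
      rwa [← Real.exp_add, add_neg_cancel, Real.exp_zero] at this
    calc t^2 * exp (-((n:ℝ)/2)*t^2)
        = (2/(n:ℝ)) * ((((n:ℝ)/2)*t^2) * exp (-(((n:ℝ)/2)*t^2))) := by
          field_simp
      _ ≤ (2/(n:ℝ)) * 1 := mul_le_mul_of_nonneg_left huE (by positivity)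
      _ = 2/(n:ℝ) := mul_one _
  have hb : BddAbove (Set.range fun θ : ℝ => (θ - θhat)^2 * (p θ x / pW x)) := by
    refine ⟨B * (2/(n:ℝ)), ?_⟩
    rintro _ ⟨θ, rfl⟩
    show (θ - θhat)^2 * (p θ x / pW x) ≤ B * (2/(n:ℝ))
    rw [hratio θ]
    calc (θ - θhat)^2 * (B * exp (-((n:ℝ)/2)*(θ-θhat)^2))
        = B * ((θ - θhat)^2 * exp (-((n:ℝ)/2)*(θ-θhat)^2)) := by ring
      _ ≤ B * (2/(n:ℝ)) := mul_le_mul_of_nonneg_left (hbound _) hB.le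
  -- evaluate at θhat + 1/√n
  have hsn : Real.sqrt (n:ℝ) ≠ 0 := (Real.sqrt_pos.mpr hnR).ne'
  refine le_trans ?_ (le_ciSup hb (θhat + 1/Real.sqrt (n:ℝ)))
  rw [hratio]
  have hsq : (θhat + 1/Real.sqrt (n:ℝ) - θhat)^2 = 1/(n:ℝ) := by
    rw [add_sub_cancel_left, div_pow, one_pow, Real.sq_sqrt hnR.le]
  rw [hsq]
  have hexp : -((n:ℝ)/2)*(1/(n:ℝ)) = -(1:ℝ)/2 := by field_simp
  rw [hexp, hBdef]
  have h1 : (1:ℝ) ≤ exp D := by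
    calc (1:ℝ) = exp 0 := Real.exp_zero.symm
      _ ≤ exp D := Real.exp_le_exp.mpr hD
  have h2 : (0:ℝ) < Real.sqrt (((n:ℝ)+lam)/lam) := by positivity
  have h3 : (0:ℝ) < exp (-(1:ℝ)/2) := exp_pos _
  have h4 : (0:ℝ) < 1/(n:ℝ) := by positivity
  nlinarith [mul_pos (mul_pos h4 h2) h3]
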